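/- With Y multiplication by x, Z the formal derivative on ℂ[x], H = Y∘Z, and G = R(H)∘Z for a fixed polynomial R of degree d: for every polynomial q ∈ ℂ[X] with q(0) = 0 and deg q = l ≥ 1, there exist polynomials γ_0, …, γ_{ld+l−1} ∈ ℂ[X] such that e^{ad_{q(G)}}(Y) = Y + Σ_{j=0}^{ld+l−1} γ_j(H)∘G^j. -/

import Mathlib

open Polynomial Finset

noncomputable section

/-- `E` is the ℂ-algebra of ℂ-linear endomorphisms of `ℂ[x]`. -/
abbrev E := Module.End ℂ (Polynomial ℂ)

/-- `Y`: multiplication by `x`. -/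
def Yop : E := LinearMap.mulLeft ℂ (X : Polynomial ℂ)

/-- `Z`: the formal derivative. -/
def Zop : E := Polynomial.derivative

/-- `H = Y ∘ Z`. -/
def Hop : E := Yop * Zop

/-- `G = R(H) ∘ Z`. -/
def Gop (R : Polynomial ℂ) : E := aeval Hop R * Zop

/-- `ad_A(B) = A∘B − B∘A`. -/
def ad (A : E) : E → E := fun B => A * B - B * A

lemma E_ext {A B : E} (h : ∀ n : ℕ, A (X ^ n : Polynomial ℂ) = B (X ^ n)) : A = B := by
  apply Module.Basis.ext (Polynomial.basisMonomials ℂ)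
  intro n
  have := h n
  simpa [Polynomial.coe_basisMonomials, ← Polynomial.X_pow_eq_monomial] using this

lemma Yop_apply (p : Polynomial ℂ) : Yop p = X * p := rfl

lemma Hop_apply_pow (n : ℕ) : Hop ((X : Polynomial ℂ) ^ n) = (n : ℂ) • (X ^ n) := by
  show Yop (Zop (X ^ n)) = _
  cases n with
  | zero => simp [Zop, Yop_apply]
  | succ m =>
    simp only [Zop, LinearMap.coe_mk, Polynomial.derivative_X_pow]
    simp [Yop_apply, Polynomial.smul_eq_C_mul]
    ring

lemma Hop_pow_apply (k n : ℕ) : (Hop ^ k) ((X : Polynomial ℂ) ^ n) = ((n : ℂ) ^ k) • (X ^ n) := by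
  induction k with
  | zero => simp
  | succ m ih =>
    rw [pow_succ', Module.End.mul_apply, ih, map_smul, Hop_apply_pow, smul_smul]
    ring_nf

lemma aeval_Hop_apply (f : Polynomial ℂ) (n : ℕ) :
    (aeval Hop f) ((X : Polynomial ℂ) ^ n) = f.eval (n : ℂ) • (X ^ n) := by
  induction f using Polynomial.induction_on' with
  | add p q hp hq => simp [map_add, hp, hq, LinearMap.add_apply, add_smul]
  | monomial k c =>
    rw [Polynomial.aeval_monomial]
    simp only [Module.End.mul_apply, Hop_pow_apply, map_smul, Polynomial.eval_monomial]
    rw [Algebra.algebraMap_eq_smul_one]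
    simp [smul_smul, mul_comm]

lemma Gop_apply_pow (R : Polynomial ℂ) (n : ℕ) :
    Gop R ((X : Polynomial ℂ) ^ n) = ((n : ℂ) * R.eval ((n - 1 : ℕ) : ℂ)) • (X ^ (n - 1)) := by
  show (aeval Hop R) (Zop (X ^ n)) = _
  cases n with
  | zero => simp [Zop]
  | succ m =>
    simp only [Zop, LinearMap.coe_mk, Polynomial.derivative_X_pow]
    have : Polynomial.C ((m + 1 : ℕ) : ℂ) * X ^ (m + 1 - 1) = ((m + 1 : ℕ) : ℂ) • X ^ m := by
      simp [Polynomial.smul_eq_C_mul]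
    rw [this, map_smul, aeval_Hop_apply, smul_smul]
    norm_num [mul_comm]

lemma GH_comm (R f : Polynomial ℂ) :
    Gop R * aeval Hop f = aeval Hop (taylor 1 f) * Gop R := by
  apply E_ext
  intro n
  simp only [Module.End.mul_apply, aeval_Hop_apply, map_smul, Gop_apply_pow, taylor_eval]
  cases n with
  | zero => simp
  | succ m =>
    simp only [Nat.add_sub_cancel, smul_smul]
    push_cast
    ring_nf

lemma GH_pow_comm (R f : Polynomial ℂ) (k : ℕ) :
    Gop R ^ k * aeval Hop f = aeval Hop (taylor (k : ℂ) f) * Gop R ^ k := by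
  induction k with
  | zero => simp [taylor_zero]
  | succ m ih =>
    rw [pow_succ', mul_assoc, ih, ← mul_assoc, GH_comm, taylor_taylor, mul_assoc, ← pow_succ']
    push_cast
    rw [add_comm]

/-- `S` with `[G,Y] = S(H)`. -/
def Spoly (R : Polynomial ℂ) : Polynomial ℂ := X * (R - taylor (-1 : ℂ) R) + R

lemma Spoly_eval (R : Polynomial ℂ) (t : ℂ) :
    (Spoly R).eval t = (t + 1) * R.eval t - t * R.eval (t - 1) := by
  simp [Spoly, taylor_eval]
  ring

lemma GY_comm (R : Polynomial ℂ) :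
    Gop R * Yop = Yop * Gop R + aeval Hop (Spoly R) := by
  apply E_ext
  intro n
  have hY : ∀ m : ℕ, Yop ((X : Polynomial ℂ) ^ m) = X ^ (m + 1) := by
    intro m; rw [Yop_apply, ← pow_succ']
  simp only [Module.End.mul_apply, LinearMap.add_apply, hY, Gop_apply_pow, map_smul,
    aeval_Hop_apply, Nat.add_sub_cancel]
  cases n with
  | zero => simp [Spoly_eval]
  | succ m =>
    have hms : (m + 1 - 1 : ℕ) = m := rfl
    rw [hms, ← add_smul]
    congr 1
    rw [Spoly_eval]
    push_cast
    ring

/-- `[G^k, Y] = Sk k (H) G^(k-1)`. -/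
def Sk (R : Polynomial ℂ) (k : ℕ) : Polynomial ℂ := ∑ i ∈ range k, taylor (i : ℂ) (Spoly R)

lemma GY_pow_comm (R : Polynomial ℂ) (k : ℕ) :
    Gop R ^ (k + 1) * Yop = Yop * Gop R ^ (k + 1) + aeval Hop (Sk R (k + 1)) * Gop R ^ k := by
  induction k with
  | zero =>
    simp only [zero_add, pow_one, pow_zero, mul_one, Sk, range_one, sum_singleton,
      Nat.cast_zero, taylor_zero]
    exact GY_comm R
  | succ m ih =>
    have h1 : Gop R ^ (m + 2) * Yop = Gop R * (Gop R ^ (m + 1) * Yop) := by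
      rw [← mul_assoc, ← pow_succ']
    rw [h1, ih, mul_add, ← mul_assoc, GY_comm, add_mul, mul_assoc, ← pow_succ',
      ← mul_assoc, GH_comm, mul_assoc, ← pow_succ']
    have hSk : Sk R (m + 2) = Spoly R + taylor (1 : ℂ) (Sk R (m + 1)) := by
      rw [Sk, Finset.sum_range_succ']
      simp only [Nat.cast_zero, taylor_zero]
      rw [add_comm, Sk, map_sum]
      congr 1
      apply Finset.sum_congr rfl
      intro i _
      rw [taylor_taylor]
      norm_num [add_comm]
    rw [hSk, map_add, add_mul, add_assoc]

lemma ad_add (A B C' : E) : ad A (B + C') = ad A B + ad A C' := by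
  simp [ad, mul_add, add_mul]; abel

lemma ad_smul (A : E) (c : ℂ) (B : E) : ad A (c • B) = c • ad A B := by
  simp [ad, mul_smul_comm, smul_mul_assoc, smul_sub]

lemma ad_zero (A : E) : ad A 0 = 0 := by simp [ad]

/-- representation map: `Ψ P = Σ_j (P.coeff j)(H) ∘ G^j`. -/
def ΨE (R : Polynomial ℂ) (P : Polynomial (Polynomial ℂ)) : E :=
  P.eval₂ (aeval Hop).toRingHom (Gop R)

lemma ΨE_add (R : Polynomial ℂ) (P Q : Polynomial (Polynomial ℂ)) :
    ΨE R (P + Q) = ΨE R P + ΨE R Q := eval₂_add _ _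

lemma ΨE_monomial (R : Polynomial ℂ) (j : ℕ) (f : Polynomial ℂ) :
    ΨE R (Polynomial.monomial j f) = aeval Hop f * Gop R ^ j := by
  simp [ΨE, eval₂_monomial]

lemma ΨE_zero (R : Polynomial ℂ) : ΨE R 0 = 0 := by simp [ΨE]

lemma aeval_C_mul (c : ℂ) (f : Polynomial ℂ) :
    aeval Hop (Polynomial.C c * f) = c • aeval Hop f := by
  rw [map_mul, aeval_C, Algebra.smul_def]

/-- polynomial data for `ad q(G) Y`. -/
def P1 (R q : Polynomial ℂ) (l : ℕ) : Polynomial (Polynomial ℂ) :=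
  ∑ k ∈ range l, Polynomial.monomial k (Polynomial.C (q.coeff (k + 1)) * Sk R (k + 1))

lemma ad_qG_Y (R q : Polynomial ℂ) (l : ℕ) (hq0 : q.eval 0 = 0) (hql : q.natDegree = l) :
    ad (aeval (Gop R) q) Yop = ΨE R (P1 R q l) := by
  have hq : aeval (Gop R) q = ∑ k ∈ range (l + 1), q.coeff k • Gop R ^ k := by
    rw [Polynomial.aeval_eq_sum_range, hql]
  have key : ad (aeval (Gop R) q) Yop
      = ∑ k ∈ range (l + 1), q.coeff k • (Gop R ^ k * Yop - Yop * Gop R ^ k) := by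
    rw [ad, hq, Finset.sum_mul, Finset.mul_sum, ← Finset.sum_sub_distrib]
    congr 1
    ext k
    rw [smul_mul_assoc, mul_smul_comm, smul_sub]
  rw [key, Finset.sum_range_succ']
  have h0 : q.coeff 0 = 0 := by rwa [Polynomial.coeff_zero_eq_eval_zero]
  rw [h0]
  simp only [zero_smul, add_zero]
  rw [ΨE, P1, Polynomial.eval₂_finset_sum]
  apply Finset.sum_congr rfl
  intro k _
  have := GY_pow_comm R k
  have hsub : Gop R ^ (k + 1) * Yop - Yop * Gop R ^ (k + 1)
      = aeval Hop (Sk R (k + 1)) * Gop R ^ k := by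
    rw [this]; abel
  rw [hsub, Polynomial.eval₂_monomial]
  show q.coeff (k + 1) • ((aeval Hop) (Sk R (k + 1)) * Gop R ^ k)
      = aeval Hop (Polynomial.C (q.coeff (k + 1)) * Sk R (k + 1)) * Gop R ^ k
  rw [aeval_C_mul, smul_mul_assoc]

/-- one `ad q(G)` step on polynomial data. -/
def stepP (R q : Polynomial ℂ) (l : ℕ) (P : Polynomial (Polynomial ℂ)) :
    Polynomial (Polynomial ℂ) :=
  ∑ k ∈ range (l + 1), Polynomial.C (Polynomial.C (q.coeff k)) * Polynomial.X ^ k *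
    (P.map (taylorAlgHom (k : ℂ)).toRingHom - P)

lemma stepP_add (R q : Polynomial ℂ) (l : ℕ) (P Q : Polynomial (Polynomial ℂ)) :
    stepP R q l (P + Q) = stepP R q l P + stepP R q l Q := by
  rw [stepP, stepP, stepP, ← Finset.sum_add_distrib]
  apply Finset.sum_congr rfl
  intro k _
  rw [Polynomial.map_add]
  ring

lemma ad_ΨE (R q : Polynomial ℂ) (l : ℕ) (hql : q.natDegree = l)
    (P : Polynomial (Polynomial ℂ)) :
    ad (aeval (Gop R) q) (ΨE R P) = ΨE R (stepP R q l P) := by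
  induction P using Polynomial.induction_on' with
  | add p r hp hr => rw [ΨE_add, ad_add, hp, hr, stepP_add, ΨE_add]
  | monomial j f =>
    have hq : aeval (Gop R) q = ∑ k ∈ range (l + 1), q.coeff k • Gop R ^ k := by
      rw [Polynomial.aeval_eq_sum_range, hql]
    rw [ΨE_monomial, ad, hq, Finset.sum_mul, Finset.mul_sum, ← Finset.sum_sub_distrib,
      stepP, ΨE, Polynomial.eval₂_finset_sum]
    apply Finset.sum_congr rfl
    intro k _
    have hRHS : Polynomial.C (Polynomial.C (q.coeff k)) * Polynomial.X ^ k *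
        ((Polynomial.monomial j f).map (taylorAlgHom (k : ℂ)).toRingHom
          - Polynomial.monomial j f)
        = Polynomial.monomial (k + j) (Polynomial.C (q.coeff k) * (taylor (k : ℂ) f - f)) := by
      rw [Polynomial.map_monomial]
      have : (taylorAlgHom (k : ℂ)).toRingHom f = taylor (k : ℂ) f := rfl
      have hms : (Polynomial.monomial j) (taylor (k : ℂ) f) - Polynomial.monomial j f
          = Polynomial.monomial j (taylor (k : ℂ) f - f) := by
        rw [map_sub]
      rw [this, hms, Polynomial.C_mul_X_pow_eq_monomial,
        Polynomial.monomial_mul_monomial]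
    rw [hRHS, Polynomial.eval₂_monomial]
    show q.coeff k • Gop R ^ k * (aeval Hop f * Gop R ^ j)
        - aeval Hop f * Gop R ^ j * (q.coeff k • Gop R ^ k)
        = aeval Hop (Polynomial.C (q.coeff k) * (taylor (k : ℂ) f - f)) * Gop R ^ (k + j)
    rw [aeval_C_mul, smul_mul_assoc, smul_mul_assoc, mul_smul_comm]
    rw [show ∀ A B : E, q.coeff k • A - q.coeff k • B = q.coeff k • (A - B) from
      fun A B => (smul_sub (q.coeff k) A B).symm]
    congr 1
    rw [← mul_assoc, GH_pow_comm, mul_assoc, ← pow_add, map_sub, sub_mul,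
      mul_assoc, ← pow_add, add_comm j k]

/-! ### degree bookkeeping -/

def bnd (d m : ℕ) : WithBot ℕ := if m ≤ d + 1 then ((d + 1 - m : ℕ) : WithBot ℕ) else ⊥

lemma le_pred_of_lt_coe {a : WithBot ℕ} {n : ℕ} (hn : 1 ≤ n) (h : a < (n : WithBot ℕ)) :
    a ≤ ((n - 1 : ℕ) : WithBot ℕ) := by
  induction a using WithBot.recBotCoe with
  | bot => exact bot_le
  | coe k =>
    rw [Nat.cast_withBot, WithBot.coe_lt_coe] at h
    rw [Nat.cast_withBot]
    exact WithBot.coe_le_coe.mpr (Nat.le_sub_one_of_lt h)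

lemma degree_taylor_eq (g : Polynomial ℂ) (a : ℂ) : (taylor a g).degree = g.degree := by
  by_cases h0 : g = 0
  · simp [h0]
  · have ht : taylor a g ≠ 0 := fun h => h0 (taylor_injective a (by simpa using h))
    rw [degree_eq_natDegree ht, degree_eq_natDegree h0, natDegree_taylor]

lemma degree_taylor_sub_lt (g : Polynomial ℂ) (hg : g ≠ 0) (a : ℂ) :
    (taylor a g - g).degree < g.degree := by
  have ht : taylor a g ≠ 0 := fun h => hg (taylor_injective a (by simpa using h))
  have hlc : (taylor a g).leadingCoeff = g.leadingCoeff := by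
    rw [taylor_apply, Polynomial.leadingCoeff_comp (by rw [natDegree_X_add_C]; norm_num),
      leadingCoeff_X_add_C, one_pow, mul_one]
  have := degree_sub_lt (degree_taylor_eq g a) ht hlc
  rwa [degree_taylor_eq g a] at this

lemma bnd_step {d m : ℕ} {g : Polynomial ℂ} (hg : g.degree ≤ bnd d m) (a : ℂ) :
    (taylor a g - g).degree ≤ bnd d (m + 1) := by
  by_cases h0 : g = 0
  · simp [h0]
  by_cases h1 : m + 1 ≤ d + 1
  · rw [bnd, if_pos h1]
    rw [bnd, if_pos (le_trans (Nat.le_succ m) h1)] at hg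
    have hlt : (taylor a g - g).degree < ((d + 1 - m : ℕ) : WithBot ℕ) :=
      lt_of_lt_of_le (degree_taylor_sub_lt g h0 a) hg
    have h2 := le_pred_of_lt_coe (show 1 ≤ d + 1 - m by omega) hlt
    have h3 : d + 1 - m - 1 = d + 1 - (m + 1) := by omega
    rwa [h3] at h2
  · by_cases h2 : m ≤ d + 1
    · rw [bnd, if_pos h2, show d + 1 - m = 0 by omega] at hg
      have hc := Polynomial.eq_C_of_degree_le_zero (show g.degree ≤ 0 by exact_mod_cast hg)
      rw [hc, taylor_C, sub_self]
      simp
    · rw [bnd, if_neg h2] at hg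
      exact absurd (degree_eq_bot.mp (le_bot_iff.mp hg)) h0

lemma degree_C_mul_le (c : ℂ) (p : Polynomial ℂ) :
    (Polynomial.C c * p).degree ≤ p.degree := by
  calc (Polynomial.C c * p).degree ≤ (Polynomial.C c).degree + p.degree := degree_mul_le _ _
    _ ≤ 0 + p.degree := add_le_add degree_C_le le_rfl
    _ = p.degree := zero_add _

lemma degree_Spoly (R : Polynomial ℂ) (d : ℕ) (hR : R.natDegree = d) :
    (Spoly R).degree ≤ (d : WithBot ℕ) := by
  have hRd : R.degree ≤ (d : WithBot ℕ) := hR ▸ degree_le_natDegree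
  rw [Spoly]
  refine le_trans (degree_add_le _ _) (max_le ?_ hRd)
  by_cases h0 : R = 0
  · simp [h0]
  have hu : (R - taylor (-1 : ℂ) R).degree < (d : WithBot ℕ) := by
    have h1 : (R - taylor (-1 : ℂ) R).degree = (taylor (-1 : ℂ) R - R).degree := by
      rw [← degree_neg, neg_sub]
    rw [h1]
    exact lt_of_lt_of_le (degree_taylor_sub_lt R h0 _) hRd
  by_cases hd : d = 0
  · subst hd
    have hz : R - taylor (-1 : ℂ) R = 0 := by
      rw [← degree_eq_bot]
      rw [Nat.cast_zero] at hu
      exact Nat.WithBot.lt_zero_iff.mp hu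
    rw [hz, mul_zero]
    simp
  · have h2 := le_pred_of_lt_coe (Nat.one_le_iff_ne_zero.mpr hd) hu
    calc (X * (R - taylor (-1 : ℂ) R)).degree
        ≤ X.degree + (R - taylor (-1 : ℂ) R).degree := degree_mul_le _ _
      _ ≤ 1 + ((d - 1 : ℕ) : WithBot ℕ) := by
          exact add_le_add degree_X_le h2
      _ = (d : WithBot ℕ) := by
          rw [show (1 : WithBot ℕ) = ((1 : ℕ) : WithBot ℕ) from rfl, ← Nat.cast_add]
          congr 1
          omega

lemma degree_Sk (R : Polynomial ℂ) (d : ℕ) (hR : R.natDegree = d) (k : ℕ) :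
    (Sk R k).degree ≤ (d : WithBot ℕ) := by
  rw [Sk]
  refine le_trans (degree_sum_le _ _) (Finset.sup_le ?_)
  intro i _
  rw [degree_taylor_eq]
  exact degree_Spoly R d hR

lemma P1_coeff_bound (R q : Polynomial ℂ) (d l : ℕ) (hR : R.natDegree = d) (j : ℕ) :
    ((P1 R q l).coeff j).degree ≤ bnd d 1 := by
  have hb : bnd d 1 = (d : WithBot ℕ) := by
    rw [bnd, if_pos (by omega : 1 ≤ d + 1)]
    norm_num
  rw [hb, P1, Polynomial.finset_sum_coeff]
  refine le_trans (degree_sum_le _ _) (Finset.sup_le ?_)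
  intro k _
  rw [Polynomial.coeff_monomial]
  split
  · exact le_trans (degree_C_mul_le _ _) (degree_Sk R d hR _)
  · simp

lemma P1_natDegree (R q : Polynomial ℂ) (l : ℕ) (hl : 1 ≤ l) :
    (P1 R q l).natDegree < 1 * l := by
  rw [one_mul]
  have : (P1 R q l).natDegree ≤ l - 1 := by
    apply natDegree_sum_le_of_forall_le
    intro k hk
    refine le_trans (natDegree_monomial_le _) ?_
    have := Finset.mem_range.mp hk
    omega
  omega

lemma stepP_coeff_bound (R q : Polynomial ℂ) (d l m : ℕ)
    (P : Polynomial (Polynomial ℂ)) (h : ∀ j, ((P.coeff j)).degree ≤ bnd d m) (i : ℕ) :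
    (((stepP R q l P).coeff i)).degree ≤ bnd d (m + 1) := by
  rw [stepP, Polynomial.finset_sum_coeff]
  refine le_trans (degree_sum_le _ _) (Finset.sup_le ?_)
  intro k _
  rw [mul_assoc, Polynomial.coeff_C_mul, X_pow_mul, Polynomial.coeff_mul_X_pow']
  split
  · rw [Polynomial.coeff_sub, Polynomial.coeff_map]
    have hc : (taylorAlgHom (k : ℂ)).toRingHom (P.coeff (i - k)) =
        taylor (k : ℂ) (P.coeff (i - k)) := rfl
    rw [hc]
    exact le_trans (degree_C_mul_le _ _) (bnd_step (h (i - k)) _)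
  · simp

lemma stepP_natDegree (R q : Polynomial ℂ) (l : ℕ) (P : Polynomial (Polynomial ℂ)) :
    (stepP R q l P).natDegree ≤ l + P.natDegree := by
  apply natDegree_sum_le_of_forall_le
  intro k hk
  refine le_trans (natDegree_mul_le) ?_
  have h1 : (Polynomial.C (Polynomial.C (q.coeff k)) * Polynomial.X ^ k
      : Polynomial (Polynomial ℂ)).natDegree ≤ k := by
    refine le_trans natDegree_mul_le ?_
    simp [natDegree_X_pow]
  have h2 : (P.map (taylorAlgHom (k : ℂ)).toRingHom - P).natDegree ≤ P.natDegree := by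
    refine le_trans (natDegree_sub_le _ _) (max_le ?_ le_rfl)
    exact natDegree_map_le
  have hkl : k ≤ l := by have := Finset.mem_range.mp hk; omega
  omega

lemma rep_lemma (R : Polynomial ℂ) (d : ℕ) (hR : R.natDegree = d)
    (q : Polynomial ℂ) (hq0 : q.eval 0 = 0) (l : ℕ) (hl : 1 ≤ l) (hql : q.natDegree = l)
    (m : ℕ) :
    ∃ P : Polynomial (Polynomial ℂ),
      (∀ j, ((P.coeff j)).degree ≤ bnd d (m + 1)) ∧ P.natDegree < (m + 1) * l ∧
      (ad (aeval (Gop R) q))^[m + 1] Yop = ΨE R P := by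
  induction m with
  | zero =>
    refine ⟨P1 R q l, fun j => P1_coeff_bound R q d l hR j, P1_natDegree R q l hl, ?_⟩
    rw [Function.iterate_one]
    exact ad_qG_Y R q l hq0 hql
  | succ m ih =>
    obtain ⟨P, hPdeg, hPnat, hPrep⟩ := ih
    refine ⟨stepP R q l P, fun j => stepP_coeff_bound R q d l (m + 1) P hPdeg j, ?_, ?_⟩
    · have h1 := stepP_natDegree R q l P
      have : l + P.natDegree < l + (m + 1) * l := by omega
      calc (stepP R q l P).natDegree ≤ l + P.natDegree := h1
        _ < (m + 1 + 1) * l := by ring_nf; ring_nf at this; omega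
    · rw [Function.iterate_succ_apply', hPrep, ad_ΨE R q l hql]

lemma ad_iterate_zero (R : Polynomial ℂ) (d : ℕ) (hR : R.natDegree = d)
    (q : Polynomial ℂ) (hq0 : q.eval 0 = 0) (l : ℕ) (hl : 1 ≤ l) (hql : q.natDegree = l)
    (k : ℕ) (hk : d + 2 ≤ k) :
    (ad (aeval (Gop R) q))^[k] Yop = 0 := by
  obtain ⟨m, rfl⟩ : ∃ m, k = m + 1 := ⟨k - 1, by omega⟩
  obtain ⟨P, hPdeg, _, hPrep⟩ := rep_lemma R d hR q hq0 l hl hql m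
  have hP0 : P = 0 := by
    ext n j
    have := hPdeg n
    rw [bnd, if_neg (by omega)] at this
    have : P.coeff n = 0 := degree_eq_bot.mp (le_bot_iff.mp this)
    simp [this]
  rw [hPrep, hP0, ΨE_zero]

/-- `e^{ad_{q(G)}}(Y) = Y + Σ_{j=0}^{ld+l−1} γ_j(H)∘G^j` for some polynomials `γ_j`,
where the exponential series is the (stabilized) finite sum. -/
theorem exp_ad_qG_on_Y (R : Polynomial ℂ) (d : ℕ) (hR : R.natDegree = d)
    (q : Polynomial ℂ) (hq0 : q.eval 0 = 0) (l : ℕ) (hl : 1 ≤ l)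
    (hql : q.natDegree = l) :
    ∃ γ : ℕ → Polynomial ℂ,
      ∀ N : ℕ, d + 2 ≤ N →
        ∑ j ∈ range N, (j.factorial : ℂ)⁻¹ • (ad (aeval (Gop R) q))^[j] Yop
          = Yop + ∑ j ∈ range (l * d + l), aeval Hop (γ j) * Gop R ^ j := by
  choose P hdeg hnat hrep using rep_lemma R d hR q hq0 l hl hql
  refine ⟨fun j => ∑ m ∈ range (d + 1), (((m + 1).factorial : ℂ))⁻¹ • (P m).coeff j, ?_⟩
  intro N hN
  have h1 : ∑ j ∈ range N, (j.factorial : ℂ)⁻¹ • (ad (aeval (Gop R) q))^[j] Yop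
      = ∑ j ∈ range (d + 2), (j.factorial : ℂ)⁻¹ • (ad (aeval (Gop R) q))^[j] Yop := by
    refine (Finset.sum_subset (Finset.range_subset_range.mpr hN) ?_).symm
    intro j _ hj
    rw [Finset.mem_range, not_lt] at hj
    rw [ad_iterate_zero R d hR q hq0 l hl hql j hj, smul_zero]
  rw [h1, Finset.sum_range_succ']
  simp only [Nat.factorial_zero, Nat.cast_one, inv_one, one_smul, Function.iterate_zero,
    id_eq]
  rw [add_comm]
  congr 1
  have h2 : ∀ i ∈ range (d + 1), ((i + 1).factorial : ℂ)⁻¹ •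
      (ad (aeval (Gop R) q))^[i + 1] Yop
      = ∑ j ∈ range (l * d + l), ((i + 1).factorial : ℂ)⁻¹ •
          (aeval Hop ((P i).coeff j) * Gop R ^ j) := by
    intro i hi
    have hlt : (P i).natDegree < l * d + l := by
      have hi' := Finset.mem_range.mp hi
      have h3 := hnat i
      have h4 : (i + 1) * l ≤ (d + 1) * l :=
        Nat.mul_le_mul_right l (by omega)
      have h5 : (d + 1) * l = l * d + l := by ring
      rw [h5] at h4
      omega
    rw [hrep i, ΨE, Polynomial.eval₂_eq_sum_range' _ hlt, Finset.smul_sum]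
    rfl
  rw [Finset.sum_congr rfl h2, Finset.sum_comm]
  apply Finset.sum_congr rfl
  intro j _
  rw [map_sum, Finset.sum_mul]
  apply Finset.sum_congr rfl
  intro i _
  rw [map_smul, smul_mul_assoc]

end
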